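/- Let q ≡ r ≡ 3 (mod 8) and s ≡ 7 (mod 8) be three distinct primes with (q/r) = (q/s) = −1 and (s/r) = 1, and let (a, b) be the fundamental (minimal positive) solution of the Pell equation X² − qrs·Y² = 1 (equivalently, ε_{qrs} = a + b√(qrs) is the fundamental unit of ℚ(√(qrs))). Then exactly one of the three numbers 2q(a−1), r(a−1), s(a−1) is a perfect square; moreover: (a) if 2q(a−1) is a square, then there exist integers b₁, b₂ with a − 1 = 2q·b₁², a + 1 = 2rs·b₂² (hence 1 = −q·b₁² + rs·b₂² and b = 2b₁b₂); (b) if r(a−1) is a square, then there exist integers b₁, b₂ with a − 1 = r·b₁², a + 1 = qs·b₂² (hence 2 = −r·b₁² + qs·b₂² and b = b₁b₂); (c) if s(a−1) is a square, then there exist integers b₁, b₂ with a − 1 = s·b₁², a + 1 = qr·b₂² (hence 2 = −s·b₁² + qr·b₂² and b = b₁b₂). -/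
import Mathlib


noncomputable section

/-- The Legendre symbol `(a/p)` (junk value `0` if `p` is not prime). -/
def leg (p : ℕ) (a : ℤ) : ℤ := if h : p.Prime then @legendreSym p ⟨h⟩ a else 0

/-- The real quadratic field `ℚ(√d)` as a subfield of `ℝ`. -/
def QF1 (d : ℕ) : IntermediateField ℚ ℝ :=
  IntermediateField.adjoin ℚ {Real.sqrt d}

/-- The multiquadratic field `ℚ(√d₁, √d₂)` as a subfield of `ℝ`. -/
def QF2 (d₁ d₂ : ℕ) : IntermediateField ℚ ℝ :=
  IntermediateField.adjoin ℚ {Real.sqrt d₁, Real.sqrt d₂}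

/-- The multiquadratic field `ℚ(√d₁, √d₂, √d₃)` as a subfield of `ℝ`. -/
def QF3 (d₁ d₂ d₃ : ℕ) : IntermediateField ℚ ℝ :=
  IntermediateField.adjoin ℚ {Real.sqrt d₁, Real.sqrt d₂, Real.sqrt d₃}

/-- The 2-class group `A(K)`: the 2-Sylow (2-primary) subgroup of the ideal class group
of the ring of integers of `K`. -/
def twoClassGroup (K : Type*) [Field K] :
    Subgroup (ClassGroup (NumberField.RingOfIntegers K)) :=
  CommGroup.primaryComponent (ClassGroup (NumberField.RingOfIntegers K)) 2

/-- The 2-rank `dim_{𝔽₂} G/G²` of a finite commutative group `G`. -/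
def twoRank (G : Type*) [CommGroup G] : ℕ :=
  Nat.log 2 (Nat.card (G ⧸ (powMonoidHom 2 : G →* G).range))

/-- `rank₂ A(K)`, the 2-rank of the 2-class group of `K`. -/
def rank2A (K : Type*) [Field K] : ℕ := twoRank (twoClassGroup K)

/-- The 2-class number `h₂(K) = |A(K)|`. -/
def h2 (K : Type*) [Field K] : ℕ := Nat.card (twoClassGroup K)

/-- The `n`-th layer `K_n = K(2 cos(2π/2^(n+2)))` of the cyclotomic `ℤ₂`-extension of `K`. -/
def layer (K : IntermediateField ℚ ℝ) (n : ℕ) : IntermediateField ℚ ℝ :=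
  K ⊔ IntermediateField.adjoin ℚ {2 * Real.cos (2 * Real.pi / 2 ^ (n + 2))}


section PellHelpers

lemma mul_sq_iff' {F : Type*} [Field F] {a b : F} (hb : IsSquare b) (hb0 : b ≠ 0) :
    IsSquare (a * b) ↔ IsSquare a := by
  obtain ⟨z, rfl⟩ := hb
  have hz : z ≠ 0 := by rintro rfl; simp at hb0
  constructor
  · rintro ⟨y, hy⟩
    exact ⟨y / z, by field_simp; linear_combination hy⟩
  · rintro ⟨x, rfl⟩
    exact ⟨x * z, by ring⟩

lemma sq_iff_of_eq_mul_sq {F : Type*} [Field F] {c t w : F} (h : c = t * w ^ 2)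
    (hw : w ≠ 0) : IsSquare c ↔ IsSquare t := by
  subst h
  exact mul_sq_iff' ⟨w, (sq w)⟩ (pow_ne_zero _ hw)

lemma nonsq_mul_nonsq {F : Type*} [Field F] [Fintype F] [DecidableEq F] {a b : F}
    (ha : ¬IsSquare a) (hb : ¬IsSquare b) : IsSquare (a * b) := by
  have ha0 : a ≠ 0 := fun h => ha (h ▸ ⟨0, by simp⟩)
  have hb0 : b ≠ 0 := fun h => hb (h ▸ ⟨0, by simp⟩)
  have h1 : quadraticChar F a = -1 := quadraticChar_neg_one_iff_not_isSquare.mpr ha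
  have h2 : quadraticChar F b = -1 := quadraticChar_neg_one_iff_not_isSquare.mpr hb
  have : quadraticChar F (a * b) = 1 := by rw [map_mul, h1, h2]; ring
  exact (quadraticChar_one_iff_isSquare (mul_ne_zero ha0 hb0)).mp this

lemma nonsq_of_nonsq_mul_sq {F : Type*} [Field F] {a b : F} (ha : ¬IsSquare a)
    (hb : IsSquare b) (hb0 : b ≠ 0) : ¬IsSquare (a * b) := fun h => ha ((mul_sq_iff' hb hb0).mp h)

lemma split_lemma (d₁ d₂ m n k : ℤ) (h1 : d₁ ∣ m) (h2 : d₂ ∣ n)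
    (hd1 : 0 < d₁) (hd2 : 0 < d₂) (hm : 0 < m) (hn : 0 < n)
    (hco : IsCoprime m n) (heq : m * n = d₁ * d₂ * k ^ 2) :
    ∃ u v : ℤ, 0 < u ∧ 0 < v ∧ m = d₁ * u ^ 2 ∧ n = d₂ * v ^ 2 ∧ k ^ 2 = (u * v) ^ 2 := by
  obtain ⟨m₁, rfl⟩ := h1
  obtain ⟨n₁, rfl⟩ := h2
  have hm₁ : 0 < m₁ := by nlinarith
  have hn₁ : 0 < n₁ := by nlinarith
  have hkey : m₁ * n₁ = k ^ 2 := by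
    have h0 : d₁ * d₂ ≠ 0 := (mul_pos hd1 hd2).ne'
    apply mul_left_cancel₀ h0
    linear_combination heq
  have hco' : IsCoprime m₁ n₁ :=
    (hco.of_isCoprime_of_dvd_left ⟨d₁, mul_comm _ _⟩).of_isCoprime_of_dvd_right ⟨d₂, mul_comm _ _⟩
  obtain ⟨u, hu⟩ := Int.sq_of_isCoprime hco' hkey
  have hu' : m₁ = u ^ 2 := by
    rcases hu with h | h
    · exact h
    · nlinarith [sq_nonneg u]
  obtain ⟨v, hv⟩ := Int.sq_of_isCoprime hco'.symm (show n₁ * m₁ = k ^ 2 by linear_combination hkey)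
  have hv' : n₁ = v ^ 2 := by
    rcases hv with h | h
    · exact h
    · nlinarith [sq_nonneg v]
  refine ⟨|u|, |v|, ?_, ?_, by rw [hu', sq_abs], by rw [hv', sq_abs], ?_⟩
  · exact abs_pos.mpr (by rintro rfl; simp at hu'; exact absurd hu' hm₁.ne')
  · exact abs_pos.mpr (by rintro rfl; simp at hv'; exact absurd hv' hn₁.ne')
  · rw [mul_pow, sq_abs, sq_abs, ← hu', ← hv', hkey]

lemma contra_side (p : ℕ) [Fact p.Prime] {c d t x w : ℤ}
    (hE : c = d * x ^ 2 + t * w ^ 2) (hd : (p : ℤ) ∣ d) (hw : ¬(p : ℤ) ∣ w) :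
    IsSquare ((c : ZMod p)) ↔ IsSquare ((t : ZMod p)) := by
  have h0 : ((d : ℤ) : ZMod p) = 0 := (ZMod.intCast_zmod_eq_zero_iff_dvd _ _).mpr hd
  have hw0 : ((w : ℤ) : ZMod p) ≠ 0 := fun h => hw ((ZMod.intCast_zmod_eq_zero_iff_dvd _ _).mp h)
  have hc : ((c : ℤ) : ZMod p) = ((t : ℤ) : ZMod p) * ((w : ℤ) : ZMod p) ^ 2 := by
    have h := congrArg (fun z : ℤ => (z : ZMod p)) hE
    push_cast at h
    rw [h0, zero_mul, zero_add] at h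
    exact h
  exact sq_iff_of_eq_mul_sq hc hw0

lemma sq_of_mul_sq {e f : ℤ} (h : IsSquare (e * f ^ 2)) (hf : f ≠ 0) : IsSquare e := by
  obtain ⟨y, hy⟩ := h
  have hdvd : f ∣ y := by
    rw [← Int.pow_dvd_pow_iff (two_ne_zero)]
    exact ⟨e, by linear_combination -hy⟩
  obtain ⟨z, rfl⟩ := hdvd
  exact ⟨z, by
    have hf2 : f ^ 2 ≠ 0 := pow_ne_zero _ hf
    apply mul_right_cancel₀ hf2
    linear_combination hy⟩

set_option maxHeartbeats 3000000 in
lemma pell_main_cases (q r s : ℕ) (hq : q.Prime) (hr : r.Prime) (hs : s.Prime)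
    (hqr : q ≠ r) (hqs : q ≠ s) (hrs : r ≠ s)
    (hq8 : q % 8 = 3) (hr8 : r % 8 = 3) (hs8 : s % 8 = 7)
    (hLrq : @legendreSym r ⟨hr⟩ (q : ℤ) = -1) (hLsq : @legendreSym s ⟨hs⟩ (q : ℤ) = -1)
    (hLrs : @legendreSym r ⟨hr⟩ (s : ℤ) = 1)
    (a b : ℤ) (hapos : 0 < a) (hbpos : 0 < b)
    (hPell : a ^ 2 - (q * r * s : ℤ) * b ^ 2 = 1)
    (hmin : ∀ a' b' : ℤ, 0 < a' → 0 < b' →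
      a' ^ 2 - (q * r * s : ℤ) * b' ^ 2 = 1 → a ≤ a') :
    (∃ u v : ℤ, 0 < u ∧ 0 < v ∧ a - 1 = 2 * q * u ^ 2 ∧ a + 1 = 2 * r * s * v ^ 2 ∧
        b = 2 * u * v) ∨
    (∃ u v : ℤ, 0 < u ∧ 0 < v ∧ a - 1 = r * u ^ 2 ∧ a + 1 = q * s * v ^ 2 ∧ b = u * v) ∨
    (∃ u v : ℤ, 0 < u ∧ 0 < v ∧ a - 1 = s * u ^ 2 ∧ a + 1 = q * r * v ^ 2 ∧ b = u * v) := by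
  haveI Fq : Fact q.Prime := ⟨hq⟩
  haveI Fr : Fact r.Prime := ⟨hr⟩
  haveI Fs : Fact s.Prime := ⟨hs⟩
  have hq4 : q % 4 = 3 := by omega
  have hr4 : r % 4 = 3 := by omega
  have hs4 : s % 4 = 3 := by omega
  have hq2 : q ≠ 2 := by omega
  have hr2 : r ≠ 2 := by omega
  have hs2 : s ≠ 2 := by omega
  have nz : ∀ p p' : ℕ, p.Prime → p'.Prime → p ≠ p' → ((p : ZMod p') ≠ 0) := by
    intro p p' hp hp' hne h
    rw [ZMod.natCast_eq_zero_iff] at h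
    exact hne ((Nat.prime_dvd_prime_iff_eq hp' hp).mp h).symm
  have Fqneg1 : ¬IsSquare (-1 : ZMod q) := by
    rw [ZMod.exists_sq_eq_neg_one_iff]; simp [hq4]
  have Fsneg1 : ¬IsSquare (-1 : ZMod s) := by
    rw [ZMod.exists_sq_eq_neg_one_iff]; simp [hs4]
  have Fq2 : ¬IsSquare (2 : ZMod q) := by
    rw [ZMod.exists_sq_eq_two_iff hq2]; omega
  have Fs2 : IsSquare (2 : ZMod s) := by
    rw [ZMod.exists_sq_eq_two_iff hs2]; omega
  have Frq : ¬IsSquare ((q : ZMod r)) := by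
    have := (legendreSym.eq_neg_one_iff r (a := (q : ℤ))).mp hLrq
    simpa using this
  have Fsq : ¬IsSquare ((q : ZMod s)) := by
    have := (legendreSym.eq_neg_one_iff s (a := (q : ℤ))).mp hLsq
    simpa using this
  have Frs : IsSquare ((s : ZMod r)) := by
    have h0 : (((s : ℤ)) : ZMod r) ≠ 0 := by simpa using nz s r hs hr (Ne.symm hrs)
    have := (legendreSym.eq_one_iff r h0).mp hLrs
    simpa using this
  have Fqr : IsSquare ((r : ZMod q)) := by
    have hrec := legendreSym.quadratic_reciprocity_three_mod_four hr4 hq4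
    have h1 : @legendreSym q Fq (r : ℤ) = 1 := by
      rw [show ((r : ℤ)) = ((r : ℕ) : ℤ) by norm_cast] at hrec ⊢
      rw [hrec]
      rw [show ((q : ℤ)) = ((q : ℕ) : ℤ) by norm_cast] at hLrq
      rw [hLrq]; ring
    have h0 : (((r : ℤ)) : ZMod q) ≠ 0 := by simpa using nz r q hr hq (Ne.symm hqr)
    have := (legendreSym.eq_one_iff q h0).mp h1
    simpa using this
  have Fqs : IsSquare ((s : ZMod q)) := by
    have hrec := legendreSym.quadratic_reciprocity_three_mod_four hs4 hq4
    have h1 : @legendreSym q Fq (s : ℤ) = 1 := by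
      rw [hrec, hLsq]; ring
    have h0 : (((s : ℤ)) : ZMod q) ≠ 0 := by simpa using nz s q hs hq (Ne.symm hqs)
    have := (legendreSym.eq_one_iff q h0).mp h1
    simpa using this
  have Fsr : ¬IsSquare ((r : ZMod s)) := by
    have hrec := legendreSym.quadratic_reciprocity_three_mod_four hr4 hs4
    have h1 : @legendreSym s Fs (r : ℤ) = -1 := by
      rw [hrec, hLrs]
    have := (legendreSym.eq_neg_one_iff s (a := (r : ℤ))).mp h1
    simpa using this
  -- composite nonsquare facts
  have Cqrs : ¬IsSquare (-((q : ZMod s) * r)) := by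
    have h1 : IsSquare ((-1 : ZMod s) * q) := nonsq_mul_nonsq Fsneg1 Fsq
    have h2 := nonsq_of_nonsq_mul_sq Fsr h1
      (mul_ne_zero (neg_ne_zero.mpr one_ne_zero) (nz q s hq hs hqs))
    intro h; apply h2
    convert h using 1; ring
  have Cqsr : ¬IsSquare ((q : ZMod r) * s) :=
    nonsq_of_nonsq_mul_sq Frq Frs (nz s r hs hr (Ne.symm hrs))
  have Cnsq : ¬IsSquare (-(s : ZMod q)) := by
    have h2 := nonsq_of_nonsq_mul_sq Fqneg1 Fqs (nz s q hs hq (Ne.symm hqs))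
    intro h; apply h2
    convert h using 1; ring
  have Crsq : IsSquare ((r : ZMod q) * s) := Fqr.mul Fqs
  -- integer prime facts
  have pqZ : Prime (q : ℤ) := Nat.prime_iff_prime_int.mp hq
  have prZ : Prime (r : ℤ) := Nat.prime_iff_prime_int.mp hr
  have psZ : Prime (s : ℤ) := Nat.prime_iff_prime_int.mp hs
  have cqr : IsCoprime (q : ℤ) (r : ℤ) := ((Nat.coprime_primes hq hr).mpr hqr).isCoprime
  have cqs : IsCoprime (q : ℤ) (s : ℤ) := ((Nat.coprime_primes hq hs).mpr hqs).isCoprime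
  have crs : IsCoprime (r : ℤ) (s : ℤ) := ((Nat.coprime_primes hr hs).mpr hrs).isCoprime
  have hq0 : (0 : ℤ) < q := by exact_mod_cast hq.pos
  have hr0 : (0 : ℤ) < r := by exact_mod_cast hr.pos
  have hs0 : (0 : ℤ) < s := by exact_mod_cast hs.pos
  have hDpos : 0 < (q : ℤ) * r * s * b ^ 2 :=
    mul_pos (mul_pos (mul_pos hq0 hr0) hs0) (pow_pos hbpos 2)
  have ha2 : 2 ≤ a := by
    by_contra h
    push_neg at h
    have ha1 : a = 1 := by omega
    subst ha1
    rw [one_pow] at hPell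
    linarith [hDpos]
  rcases Int.even_or_odd a with ⟨t, hta⟩ | ⟨t, hta⟩
  · -- Case B : a even
    have hta' : a = 2 * t := by linarith
    clear hta
    subst hta'
    have hM : 0 < 2 * t - 1 := by linarith
    have hN : 0 < 2 * t + 1 := by linarith
    have hco : IsCoprime (2 * t - 1) (2 * t + 1) := ⟨t, -(t - 1), by ring⟩
    have hMN : (2 * t - 1) * (2 * t + 1) = (q : ℤ) * r * s * b ^ 2 := by linear_combination hPell
    have hnb : ∀ p : ℤ, Prime p → p ∣ (2 * t - 1) → p ∣ (2 * t + 1) → False :=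
      fun p hp h1 h2 => hp.not_unit (hco.isUnit_of_dvd' h1 h2)
    have Hq : (q : ℤ) ∣ (2 * t - 1) ∨ (q : ℤ) ∣ (2 * t + 1) :=
      pqZ.dvd_or_dvd ⟨(r : ℤ) * s * b ^ 2, by rw [hMN]; ring⟩
    have Hr : (r : ℤ) ∣ (2 * t - 1) ∨ (r : ℤ) ∣ (2 * t + 1) :=
      prZ.dvd_or_dvd ⟨(q : ℤ) * s * b ^ 2, by rw [hMN]; ring⟩
    have Hs : (s : ℤ) ∣ (2 * t - 1) ∨ (s : ℤ) ∣ (2 * t + 1) :=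
      psZ.dvd_or_dvd ⟨(q : ℤ) * r * b ^ 2, by rw [hMN]; ring⟩
    rcases Hq with hqM | hqN <;> rcases Hr with hrM | hrN <;> rcases Hs with hsM | hsN
    · -- B1 : d₁ = qrs, d₂ = 1
      have hd1 : ((q : ℤ) * r * s) ∣ (2 * t - 1) :=
        (cqs.mul_left crs).mul_dvd (cqr.mul_dvd hqM hrM) hsM
      obtain ⟨u, v, hu, hv, hm, hn, hk⟩ := split_lemma ((q : ℤ) * r * s) 1 _ _ b hd1
        (one_dvd _) (mul_pos (mul_pos hq0 hr0) hs0) one_pos hM hN hco (by rw [hMN]; try ring)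
      have hE : (2 : ℤ) = (-((q : ℤ) * r * s)) * u ^ 2 + 1 * v ^ 2 := by
        linear_combination hn - hm
      have hw : ¬(q : ℤ) ∣ v := fun h => hnb _ pqZ hqM
        (by rw [hn]; exact (dvd_pow h two_ne_zero).mul_left _)
      have hiff := contra_side q hE ⟨-((r : ℤ) * s), by ring⟩ hw
      exact absurd (hiff.mpr ⟨1, by norm_num⟩) (by push_cast; exact Fq2)
    · -- B2 : d₁ = qr, d₂ = s
      have hd1 : ((q : ℤ) * r) ∣ (2 * t - 1) := cqr.mul_dvd hqM hrM
      obtain ⟨u, v, hu, hv, hm, hn, hk⟩ := split_lemma ((q : ℤ) * r) (s : ℤ) _ _ b hd1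
        hsN (mul_pos hq0 hr0) hs0 hM hN hco (by rw [hMN]; try ring)
      have hE : (2 : ℤ) = (-((q : ℤ) * r)) * u ^ 2 + (s : ℤ) * v ^ 2 := by
        linear_combination hn - hm
      have hw : ¬(q : ℤ) ∣ v := fun h => hnb _ pqZ hqM
        (by rw [hn]; exact (dvd_pow h two_ne_zero).mul_left _)
      have hiff := contra_side q hE ⟨-(r : ℤ), by ring⟩ hw
      exact absurd (hiff.mpr (by push_cast; exact Fqs)) (by push_cast; exact Fq2)
    · -- B3 : d₁ = qs, d₂ = r
      have hd1 : ((q : ℤ) * s) ∣ (2 * t - 1) := cqs.mul_dvd hqM hsM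
      obtain ⟨u, v, hu, hv, hm, hn, hk⟩ := split_lemma ((q : ℤ) * s) (r : ℤ) _ _ b hd1
        hrN (mul_pos hq0 hs0) hr0 hM hN hco (by rw [hMN]; try ring)
      have hE : (2 : ℤ) = (-((q : ℤ) * s)) * u ^ 2 + (r : ℤ) * v ^ 2 := by
        linear_combination hn - hm
      have hw : ¬(q : ℤ) ∣ v := fun h => hnb _ pqZ hqM
        (by rw [hn]; exact (dvd_pow h two_ne_zero).mul_left _)
      have hiff := contra_side q hE ⟨-(s : ℤ), by ring⟩ hw
      exact absurd (hiff.mpr (by push_cast; exact Fqr)) (by push_cast; exact Fq2)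
    · -- B4 : d₁ = q, d₂ = rs
      have hd2 : ((r : ℤ) * s) ∣ (2 * t + 1) := crs.mul_dvd hrN hsN
      obtain ⟨u, v, hu, hv, hm, hn, hk⟩ := split_lemma (q : ℤ) ((r : ℤ) * s) _ _ b hqM
        hd2 hq0 (mul_pos hr0 hs0) hM hN hco (by rw [hMN]; try ring)
      have hE : (2 : ℤ) = (-(q : ℤ)) * u ^ 2 + (r : ℤ) * s * v ^ 2 := by
        linear_combination hn - hm
      have hw : ¬(q : ℤ) ∣ v := fun h => hnb _ pqZ hqM
        (by rw [hn]; exact (dvd_pow h two_ne_zero).mul_left _)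
      have hiff := contra_side q hE ⟨-1, by ring⟩ hw
      exact absurd (hiff.mpr (by push_cast; exact Crsq)) (by push_cast; exact Fq2)
    · -- B5 : d₁ = rs, d₂ = q
      have hd1 : ((r : ℤ) * s) ∣ (2 * t - 1) := crs.mul_dvd hrM hsM
      obtain ⟨u, v, hu, hv, hm, hn, hk⟩ := split_lemma ((r : ℤ) * s) (q : ℤ) _ _ b hd1
        hqN (mul_pos hr0 hs0) hq0 hM hN hco (by rw [hMN]; try ring)
      have hE : (2 : ℤ) = (-((r : ℤ) * s)) * u ^ 2 + (q : ℤ) * v ^ 2 := by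
        linear_combination hn - hm
      have hw : ¬(s : ℤ) ∣ v := fun h => hnb _ psZ hsM
        (by rw [hn]; exact (dvd_pow h two_ne_zero).mul_left _)
      have hiff := contra_side s hE ⟨-(r : ℤ), by ring⟩ hw
      exact absurd (hiff.mp (by push_cast; exact Fs2)) (by push_cast; exact Fsq)
    · -- B6 : d₁ = r, d₂ = qs : SURVIVES
      have hd2 : ((q : ℤ) * s) ∣ (2 * t + 1) := cqs.mul_dvd hqN hsN
      obtain ⟨u, v, hu, hv, hm, hn, hk⟩ := split_lemma (r : ℤ) ((q : ℤ) * s) _ _ b hrM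
        hd2 hr0 (mul_pos hq0 hs0) hM hN hco (by rw [hMN]; try ring)
      have hbe : b = u * v := by
        have h0 : (b - u * v) * (b + u * v) = 0 := by linear_combination hk
        rcases mul_eq_zero.mp h0 with h | h
        · linarith
        · nlinarith [mul_pos hu hv]
      exact Or.inr (Or.inl ⟨u, v, hu, hv, by linear_combination hm, by linear_combination hn,
        hbe⟩)
    · -- B7 : d₁ = s, d₂ = qr : SURVIVES
      have hd2 : ((q : ℤ) * r) ∣ (2 * t + 1) := cqr.mul_dvd hqN hrN
      obtain ⟨u, v, hu, hv, hm, hn, hk⟩ := split_lemma (s : ℤ) ((q : ℤ) * r) _ _ b hsM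
        hd2 hs0 (mul_pos hq0 hr0) hM hN hco (by rw [hMN]; try ring)
      have hbe : b = u * v := by
        have h0 : (b - u * v) * (b + u * v) = 0 := by linear_combination hk
        rcases mul_eq_zero.mp h0 with h | h
        · linarith
        · nlinarith [mul_pos hu hv]
      exact Or.inr (Or.inr ⟨u, v, hu, hv, by linear_combination hm, by linear_combination hn,
        hbe⟩)
    · -- B8 : d₁ = 1, d₂ = qrs
      have hd2 : ((q : ℤ) * r * s) ∣ (2 * t + 1) :=
        (cqs.mul_left crs).mul_dvd (cqr.mul_dvd hqN hrN) hsN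
      obtain ⟨u, v, hu, hv, hm, hn, hk⟩ := split_lemma 1 ((q : ℤ) * r * s) _ _ b (one_dvd _)
        hd2 one_pos (mul_pos (mul_pos hq0 hr0) hs0) hM hN hco (by rw [hMN]; try ring)
      have hE : (2 : ℤ) = ((q : ℤ) * r * s) * v ^ 2 + (-1) * u ^ 2 := by
        linear_combination hn - hm
      have hw : ¬(s : ℤ) ∣ u := fun h => hnb _ psZ
        (by rw [hm]; exact (dvd_pow h two_ne_zero).mul_left _) hsN
      have hiff := contra_side s hE ⟨(q : ℤ) * r, by ring⟩ hw
      exact absurd (hiff.mp (by push_cast; exact Fs2)) (by push_cast; exact Fsneg1)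
  · -- Case A : a odd
    subst hta
    have ht1 : 1 ≤ t := by omega
    obtain ⟨c, hbc⟩ : (2 : ℤ) ∣ b := by
      rcases Int.even_or_odd b with ⟨c, hc⟩ | ⟨c, hc⟩
      · exact ⟨c, by linarith⟩
      · exfalso
        subst hc
        have h2 : (q : ℤ) * r * s =
            2 * (2 * (t ^ 2 + t) - (q : ℤ) * r * s * (2 * c ^ 2 + 2 * c)) := by
          linear_combination -hPell
        have hdvd : (2 : ℤ) ∣ (q : ℤ) * ((r : ℤ) * s) :=
          ⟨2 * (t ^ 2 + t) - (q : ℤ) * r * s * (2 * c ^ 2 + 2 * c), by linear_combination h2⟩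
        rcases Int.prime_two.dvd_mul.mp hdvd with h | h
        · have : (2 : ℕ) ∣ q := by exact_mod_cast h
          omega
        · rcases Int.prime_two.dvd_mul.mp h with h' | h'
          · have : (2 : ℕ) ∣ r := by exact_mod_cast h'
            omega
          · have : (2 : ℕ) ∣ s := by exact_mod_cast h'
            omega
    subst hbc
    have hc0 : 0 < c := by linarith
    have hMN : t * (t + 1) = (q : ℤ) * r * s * c ^ 2 := by
      have h4 : (4 : ℤ) * (t * (t + 1)) = 4 * ((q : ℤ) * r * s * c ^ 2) := by
        linear_combination hPell
      have h40 : (4 : ℤ) ≠ 0 := by norm_num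
      exact mul_left_cancel₀ h40 h4
    have hM : 0 < t := by linarith
    have hN : 0 < t + 1 := by linarith
    have hco : IsCoprime t (t + 1) := ⟨-1, 1, by ring⟩
    have hnb : ∀ p : ℤ, Prime p → p ∣ t → p ∣ (t + 1) → False :=
      fun p hp h1 h2 => hp.not_unit (hco.isUnit_of_dvd' h1 h2)
    have Hq : (q : ℤ) ∣ t ∨ (q : ℤ) ∣ (t + 1) :=
      pqZ.dvd_or_dvd ⟨(r : ℤ) * s * c ^ 2, by rw [hMN]; ring⟩
    have Hr : (r : ℤ) ∣ t ∨ (r : ℤ) ∣ (t + 1) :=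
      prZ.dvd_or_dvd ⟨(q : ℤ) * s * c ^ 2, by rw [hMN]; ring⟩
    have Hs : (s : ℤ) ∣ t ∨ (s : ℤ) ∣ (t + 1) :=
      psZ.dvd_or_dvd ⟨(q : ℤ) * r * c ^ 2, by rw [hMN]; ring⟩
    rcases Hq with hqM | hqN <;> rcases Hr with hrM | hrN <;> rcases Hs with hsM | hsN
    · -- A1 : d₁ = qrs, d₂ = 1 : minimality
      have hd1 : ((q : ℤ) * r * s) ∣ t :=
        (cqs.mul_left crs).mul_dvd (cqr.mul_dvd hqM hrM) hsM
      obtain ⟨u, v, hu, hv, hm, hn, hk⟩ := split_lemma ((q : ℤ) * r * s) 1 _ _ c hd1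
        (one_dvd _) (mul_pos (mul_pos hq0 hr0) hs0) one_pos hM hN hco (by rw [hMN]; try ring)
      have hPell' : v ^ 2 - (q : ℤ) * r * s * u ^ 2 = 1 := by linear_combination hm - hn
      have hav := hmin v u hv hu hPell'
      have h1 : (2 * t + 1) * v ≤ v * v := mul_le_mul_of_nonneg_right hav hv.le
      have h2 : (2 * t + 1) * 1 ≤ (2 * t + 1) * v := mul_le_mul_of_nonneg_left hv (by linarith)
      nlinarith [hn, h1, h2, ht1]
    · -- A2 : d₁ = qr, d₂ = s
      have hd1 : ((q : ℤ) * r) ∣ t := cqr.mul_dvd hqM hrM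
      obtain ⟨u, v, hu, hv, hm, hn, hk⟩ := split_lemma ((q : ℤ) * r) (s : ℤ) _ _ c hd1
        hsN (mul_pos hq0 hr0) hs0 hM hN hco (by rw [hMN]; try ring)
      have hE : (1 : ℤ) = (s : ℤ) * v ^ 2 + (-((q : ℤ) * r)) * u ^ 2 := by
        linear_combination hn - hm
      have hw : ¬(s : ℤ) ∣ u := fun h => hnb _ psZ
        (by rw [hm]; exact (dvd_pow h two_ne_zero).mul_left _) hsN
      have hiff := contra_side s hE (dvd_refl _) hw
      exact absurd (hiff.mp ⟨1, by norm_num⟩) (by push_cast; exact Cqrs)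
    · -- A3 : d₁ = qs, d₂ = r
      have hd1 : ((q : ℤ) * s) ∣ t := cqs.mul_dvd hqM hsM
      obtain ⟨u, v, hu, hv, hm, hn, hk⟩ := split_lemma ((q : ℤ) * s) (r : ℤ) _ _ c hd1
        hrN (mul_pos hq0 hs0) hr0 hM hN hco (by rw [hMN]; try ring)
      have hE : (1 : ℤ) = (-((q : ℤ) * s)) * u ^ 2 + (r : ℤ) * v ^ 2 := by
        linear_combination hn - hm
      have hw : ¬(s : ℤ) ∣ v := fun h => hnb _ psZ hsM
        (by rw [hn]; exact (dvd_pow h two_ne_zero).mul_left _)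
      have hiff := contra_side s hE ⟨-(q : ℤ), by ring⟩ hw
      exact absurd (hiff.mp ⟨1, by norm_num⟩) (by push_cast; exact Fsr)
    · -- A4 : d₁ = q, d₂ = rs : SURVIVES
      have hd2 : ((r : ℤ) * s) ∣ (t + 1) := crs.mul_dvd hrN hsN
      obtain ⟨u, v, hu, hv, hm, hn, hk⟩ := split_lemma (q : ℤ) ((r : ℤ) * s) _ _ c hqM
        hd2 hq0 (mul_pos hr0 hs0) hM hN hco (by rw [hMN]; try ring)
      have hce : c = u * v := by
        have h0 : (c - u * v) * (c + u * v) = 0 := by linear_combination hk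
        rcases mul_eq_zero.mp h0 with h | h
        · linarith
        · nlinarith [mul_pos hu hv]
      exact Or.inl ⟨u, v, hu, hv, by linear_combination 2 * hm, by linear_combination 2 * hn,
        by linear_combination 2 * hce⟩
    · -- A5 : d₁ = rs, d₂ = q
      have hd1 : ((r : ℤ) * s) ∣ t := crs.mul_dvd hrM hsM
      obtain ⟨u, v, hu, hv, hm, hn, hk⟩ := split_lemma ((r : ℤ) * s) (q : ℤ) _ _ c hd1
        hqN (mul_pos hr0 hs0) hq0 hM hN hco (by rw [hMN]; try ring)
      have hE : (1 : ℤ) = (-((r : ℤ) * s)) * u ^ 2 + (q : ℤ) * v ^ 2 := by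
        linear_combination hn - hm
      have hw : ¬(r : ℤ) ∣ v := fun h => hnb _ prZ hrM
        (by rw [hn]; exact (dvd_pow h two_ne_zero).mul_left _)
      have hiff := contra_side r hE ⟨-(s : ℤ), by ring⟩ hw
      exact absurd (hiff.mp ⟨1, by norm_num⟩) (by push_cast; exact Frq)
    · -- A6 : d₁ = r, d₂ = qs
      obtain ⟨u, v, hu, hv, hm, hn, hk⟩ := split_lemma (r : ℤ) ((q : ℤ) * s) _ _ c hrM
        (cqs.mul_dvd hqN hsN) hr0 (mul_pos hq0 hs0) hM hN hco (by rw [hMN]; try ring)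
      have hE : (1 : ℤ) = (-(r : ℤ)) * u ^ 2 + (q : ℤ) * s * v ^ 2 := by
        linear_combination hn - hm
      have hw : ¬(r : ℤ) ∣ v := fun h => hnb _ prZ hrM
        (by rw [hn]; exact (dvd_pow h two_ne_zero).mul_left _)
      have hiff := contra_side r hE ⟨-1, by ring⟩ hw
      exact absurd (hiff.mp ⟨1, by norm_num⟩) (by push_cast; exact Cqsr)
    · -- A7 : d₁ = s, d₂ = qr
      obtain ⟨u, v, hu, hv, hm, hn, hk⟩ := split_lemma (s : ℤ) ((q : ℤ) * r) _ _ c hsM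
        (cqr.mul_dvd hqN hrN) hs0 (mul_pos hq0 hr0) hM hN hco (by rw [hMN]; try ring)
      have hE : (1 : ℤ) = ((q : ℤ) * r) * v ^ 2 + (-(s : ℤ)) * u ^ 2 := by
        linear_combination hn - hm
      have hw : ¬(q : ℤ) ∣ u := fun h => hnb _ pqZ
        (by rw [hm]; exact (dvd_pow h two_ne_zero).mul_left _) hqN
      have hiff := contra_side q hE ⟨(r : ℤ), rfl⟩ hw
      exact absurd (hiff.mp ⟨1, by norm_num⟩) (by push_cast; exact Cnsq)
    · -- A8 : d₁ = 1, d₂ = qrs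
      have hd2 : ((q : ℤ) * r * s) ∣ (t + 1) :=
        (cqs.mul_left crs).mul_dvd (cqr.mul_dvd hqN hrN) hsN
      obtain ⟨u, v, hu, hv, hm, hn, hk⟩ := split_lemma 1 ((q : ℤ) * r * s) _ _ c (one_dvd _)
        hd2 one_pos (mul_pos (mul_pos hq0 hr0) hs0) hM hN hco (by rw [hMN]; try ring)
      have hE : (1 : ℤ) = ((q : ℤ) * r * s) * v ^ 2 + (-1) * u ^ 2 := by
        linear_combination hn - hm
      have hw : ¬(q : ℤ) ∣ u := fun h => hnb _ pqZ
        (by rw [hm]; exact (dvd_pow h two_ne_zero).mul_left _) hqN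
      have hiff := contra_side q hE ⟨(r : ℤ) * s, by ring⟩ hw
      exact absurd (hiff.mp ⟨1, by norm_num⟩) (by push_cast; exact Fqneg1)

end PellHelpers

theorem statement_13 (q r s : ℕ) (hq : q.Prime) (hr : r.Prime) (hs : s.Prime)
    (hqr : q ≠ r) (hqs : q ≠ s) (hrs : r ≠ s)
    (hq8 : q % 8 = 3) (hr8 : r % 8 = 3) (hs8 : s % 8 = 7)
    (hlqr : leg r (q : ℤ) = -1) (hlqs : leg s (q : ℤ) = -1) (hlsr : leg r (s : ℤ) = 1)
    (a b : ℤ) (hapos : 0 < a) (hbpos : 0 < b)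
    (hPell : a ^ 2 - (q * r * s : ℤ) * b ^ 2 = 1)
    (hmin : ∀ a' b' : ℤ, 0 < a' → 0 < b' →
      a' ^ 2 - (q * r * s : ℤ) * b' ^ 2 = 1 → a ≤ a') :
    ((IsSquare (2 * (q : ℤ) * (a - 1)) ∨ IsSquare ((r : ℤ) * (a - 1)) ∨
        IsSquare ((s : ℤ) * (a - 1))) ∧
      ¬(IsSquare (2 * (q : ℤ) * (a - 1)) ∧ IsSquare ((r : ℤ) * (a - 1))) ∧
      ¬(IsSquare (2 * (q : ℤ) * (a - 1)) ∧ IsSquare ((s : ℤ) * (a - 1))) ∧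
      ¬(IsSquare ((r : ℤ) * (a - 1)) ∧ IsSquare ((s : ℤ) * (a - 1)))) ∧
    (IsSquare (2 * (q : ℤ) * (a - 1)) →
      ∃ b₁ b₂ : ℤ, a - 1 = 2 * (q : ℤ) * b₁ ^ 2 ∧ a + 1 = 2 * (r : ℤ) * s * b₂ ^ 2 ∧
        (1 : ℤ) = -(q : ℤ) * b₁ ^ 2 + (r : ℤ) * s * b₂ ^ 2 ∧ b = 2 * b₁ * b₂) ∧
    (IsSquare ((r : ℤ) * (a - 1)) →
      ∃ b₁ b₂ : ℤ, a - 1 = (r : ℤ) * b₁ ^ 2 ∧ a + 1 = (q : ℤ) * s * b₂ ^ 2 ∧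
        (2 : ℤ) = -(r : ℤ) * b₁ ^ 2 + (q : ℤ) * s * b₂ ^ 2 ∧ b = b₁ * b₂) ∧
    (IsSquare ((s : ℤ) * (a - 1)) →
      ∃ b₁ b₂ : ℤ, a - 1 = (s : ℤ) * b₁ ^ 2 ∧ a + 1 = (q : ℤ) * r * b₂ ^ 2 ∧
        (2 : ℤ) = -(s : ℤ) * b₁ ^ 2 + (q : ℤ) * r * b₂ ^ 2 ∧ b = b₁ * b₂) := by
  haveI Fq : Fact q.Prime := ⟨hq⟩
  haveI Fr : Fact r.Prime := ⟨hr⟩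
  haveI Fs : Fact s.Prime := ⟨hs⟩
  simp only [leg, dif_pos hr] at hlqr hlsr
  simp only [leg, dif_pos hs] at hlqs
  have H := pell_main_cases q r s hq hr hs hqr hqs hrs hq8 hr8 hs8 hlqr hlqs hlsr
    a b hapos hbpos hPell hmin
  have hq0 : (0 : ℤ) < q := by exact_mod_cast hq.pos
  have hr0 : (0 : ℤ) < r := by exact_mod_cast hr.pos
  have hs0 : (0 : ℤ) < s := by exact_mod_cast hs.pos
  have hDpos : 0 < (q : ℤ) * r * s * b ^ 2 :=
    mul_pos (mul_pos (mul_pos hq0 hr0) hs0) (pow_pos hbpos 2)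
  have ha1 : a - 1 ≠ 0 := by
    intro h
    have ha : a = 1 := by linarith
    subst ha
    rw [one_pow] at hPell
    linarith
  -- integer nonsquare facts
  have N2qr : ¬IsSquare (2 * (q : ℤ) * r) := by
    rintro ⟨y, hy⟩
    have h2y : (2 : ℤ) ∣ y := by
      refine Int.prime_two.dvd_of_dvd_pow (n := 2) ⟨(q : ℤ) * r, by linear_combination -hy⟩
    obtain ⟨z, rfl⟩ := h2y
    have hqr2 : (q : ℤ) * r = 2 * z ^ 2 := by
      have := mul_left_cancel₀ (two_ne_zero (α := ℤ))
        (show (2 : ℤ) * ((q : ℤ) * r) = 2 * (2 * z ^ 2) by linear_combination hy)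
      exact this
    have : (2 : ℤ) ∣ (q : ℤ) * r := ⟨z ^ 2, hqr2⟩
    rcases Int.prime_two.dvd_mul.mp this with h | h
    · have : (2 : ℕ) ∣ q := by exact_mod_cast h
      omega
    · have : (2 : ℕ) ∣ r := by exact_mod_cast h
      omega
  have N2qs : ¬IsSquare (2 * (q : ℤ) * s) := by
    rintro ⟨y, hy⟩
    have h2y : (2 : ℤ) ∣ y := by
      refine Int.prime_two.dvd_of_dvd_pow (n := 2) ⟨(q : ℤ) * s, by linear_combination -hy⟩
    obtain ⟨z, rfl⟩ := h2y
    have hqs2 : (q : ℤ) * s = 2 * z ^ 2 := by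
      have := mul_left_cancel₀ (two_ne_zero (α := ℤ))
        (show (2 : ℤ) * ((q : ℤ) * s) = 2 * (2 * z ^ 2) by linear_combination hy)
      exact this
    have : (2 : ℤ) ∣ (q : ℤ) * s := ⟨z ^ 2, hqs2⟩
    rcases Int.prime_two.dvd_mul.mp this with h | h
    · have : (2 : ℕ) ∣ q := by exact_mod_cast h
      omega
    · have : (2 : ℕ) ∣ s := by exact_mod_cast h
      omega
  have prZ : Prime (r : ℤ) := Nat.prime_iff_prime_int.mp hr
  have Nrs : ¬IsSquare ((r : ℤ) * s) := by
    rintro ⟨y, hy⟩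
    have hry : (r : ℤ) ∣ y := by
      refine prZ.dvd_of_dvd_pow (n := 2) ⟨(s : ℤ), by linear_combination -hy⟩
    obtain ⟨z, rfl⟩ := hry
    have hsz : (s : ℤ) = (r : ℤ) * z ^ 2 := by
      have hrne : (r : ℤ) ≠ 0 := hr0.ne'
      apply mul_left_cancel₀ hrne
      linear_combination hy
    have hZd : (r : ℤ) ∣ (s : ℤ) := ⟨z ^ 2, hsz⟩
    have : (r : ℕ) ∣ s := Int.natCast_dvd_natCast.mp hZd
    exact hrs ((Nat.prime_dvd_prime_iff_eq hr hs).mp this)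
  -- pairwise exclusions
  have notAB : ¬(IsSquare (2 * (q : ℤ) * (a - 1)) ∧ IsSquare ((r : ℤ) * (a - 1))) := by
    rintro ⟨h1, h2⟩
    have h3 := h1.mul h2
    rw [show 2 * (q : ℤ) * (a - 1) * ((r : ℤ) * (a - 1)) = 2 * (q : ℤ) * r * (a - 1) ^ 2
      by ring] at h3
    exact N2qr (sq_of_mul_sq h3 ha1)
  have notAC : ¬(IsSquare (2 * (q : ℤ) * (a - 1)) ∧ IsSquare ((s : ℤ) * (a - 1))) := by
    rintro ⟨h1, h2⟩
    have h3 := h1.mul h2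
    rw [show 2 * (q : ℤ) * (a - 1) * ((s : ℤ) * (a - 1)) = 2 * (q : ℤ) * s * (a - 1) ^ 2
      by ring] at h3
    exact N2qs (sq_of_mul_sq h3 ha1)
  have notBC : ¬(IsSquare ((r : ℤ) * (a - 1)) ∧ IsSquare ((s : ℤ) * (a - 1))) := by
    rintro ⟨h1, h2⟩
    have h3 := h1.mul h2
    rw [show (r : ℤ) * (a - 1) * ((s : ℤ) * (a - 1)) = (r : ℤ) * s * (a - 1) ^ 2
      by ring] at h3
    exact Nrs (sq_of_mul_sq h3 ha1)
  -- squares from each case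
  have sqA : (∃ u v : ℤ, 0 < u ∧ 0 < v ∧ a - 1 = 2 * q * u ^ 2 ∧ a + 1 = 2 * r * s * v ^ 2 ∧
      b = 2 * u * v) → IsSquare (2 * (q : ℤ) * (a - 1)) := by
    rintro ⟨u, v, -, -, h1, -, -⟩
    exact ⟨2 * (q : ℤ) * u, by linear_combination (2 * (q : ℤ)) * h1⟩
  have sqB : (∃ u v : ℤ, 0 < u ∧ 0 < v ∧ a - 1 = r * u ^ 2 ∧ a + 1 = q * s * v ^ 2 ∧
      b = u * v) → IsSquare ((r : ℤ) * (a - 1)) := by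
    rintro ⟨u, v, -, -, h1, -, -⟩
    exact ⟨(r : ℤ) * u, by linear_combination (r : ℤ) * h1⟩
  have sqC : (∃ u v : ℤ, 0 < u ∧ 0 < v ∧ a - 1 = s * u ^ 2 ∧ a + 1 = q * r * v ^ 2 ∧
      b = u * v) → IsSquare ((s : ℤ) * (a - 1)) := by
    rintro ⟨u, v, -, -, h1, -, -⟩
    exact ⟨(s : ℤ) * u, by linear_combination (s : ℤ) * h1⟩
  refine ⟨⟨?_, notAB, notAC, notBC⟩, ?_, ?_, ?_⟩
  · rcases H with hA | hB | hC
    · exact Or.inl (sqA hA)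
    · exact Or.inr (Or.inl (sqB hB))
    · exact Or.inr (Or.inr (sqC hC))
  · intro h
    rcases H with hA | hB | hC
    · obtain ⟨u, v, hu, hv, h1, h2, hb⟩ := hA
      refine ⟨u, v, h1, by linear_combination h2, ?_, hb⟩
      have h3 : 2 * (1 : ℤ) = 2 * (-(q : ℤ) * u ^ 2 + (r : ℤ) * s * v ^ 2) := by
        linear_combination h2 - h1
      exact mul_left_cancel₀ two_ne_zero h3
    · exact absurd ⟨h, sqB hB⟩ notAB
    · exact absurd ⟨h, sqC hC⟩ notAC
  · intro h
    rcases H with hA | hB | hC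
    · exact absurd ⟨sqA hA, h⟩ notAB
    · obtain ⟨u, v, hu, hv, h1, h2, hb⟩ := hB
      exact ⟨u, v, h1, by linear_combination h2, by linear_combination h2 - h1, hb⟩
    · exact absurd ⟨h, sqC hC⟩ notBC
  · intro h
    rcases H with hA | hB | hC
    · exact absurd ⟨sqA hA, h⟩ notAC
    · exact absurd ⟨sqB hB, h⟩ notBC
    · obtain ⟨u, v, hu, hv, h1, h2, hb⟩ := hC
      exact ⟨u, v, h1, by linear_combination h2, by linear_combination h2 - h1, hb⟩
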